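/- The Seifert matrix M = [[1,−1,−1,0],[0,1,−1,0],[0,0,1,−1],[0,0,0,1]] satisfies x M xᵀ = 0 for x = (1,1,1,0), and the maximal rank of a sublattice N ⊆ ℤ⁴ with y M zᵀ = 0 for all y, z ∈ N is exactly 1; hence the Taylor invariant m = 4/2 − 1 = 1. -/

import Mathlib

open Matrix

private lemma seifert_pair (y z : Fin 4 → ℤ) :
    y ⬝ᵥ (!![1, -1, -1, 0; 0, 1, -1, 0; 0, 0, 1, -1; 0, 0, 0, 1] :
        Matrix (Fin 4) (Fin 4) ℤ).mulVec z =
    y 0 * (z 0 - z 1 - z 2) + y 1 * (z 1 - z 2) + y 2 * (z 2 - z 3) + y 3 * z 3 := by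
  simp [dotProduct, Matrix.mulVec, Fin.sum_univ_four, Matrix.vecHead, Matrix.vecTail]
  ring

private lemma seifert_core (a b c d e f g h : ℤ)
    (hy : a*(a-b-c) + b*(b-c) + c*(c-d) + d*d = 0)
    (hz : e*(e-f-g) + f*(f-g) + g*(g-h) + h*h = 0)
    (hyz : a*(e-f-g) + b*(f-g) + c*(g-h) + d*h = 0)
    (hzy : e*(a-b-c) + f*(b-c) + g*(c-d) + h*d = 0) :
    (c*e = g*a ∧ c*f = g*b ∧ c*h = g*d) ∧ (c = 0 → a = 0 ∧ b = 0 ∧ d = 0) := by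
  have key : (c*(2*e-f-g) - g*(2*a-b-c))^2 + 3*(c*(f-g)-g*(b-c))^2
      + (c*(2*h-g)-g*(2*d-c))^2 = 0 := by
    linear_combination 4*g^2*hy - 4*c*g*hyz - 4*c*g*hzy + 4*c^2*hz
  have hA : c*(2*e-f-g) - g*(2*a-b-c) = 0 := by
    nlinarith [sq_nonneg (c*(2*e-f-g) - g*(2*a-b-c)), sq_nonneg (c*(f-g)-g*(b-c)),
      sq_nonneg (c*(2*h-g)-g*(2*d-c))]
  have hB : c*(f-g)-g*(b-c) = 0 := by
    nlinarith [sq_nonneg (c*(2*e-f-g) - g*(2*a-b-c)), sq_nonneg (c*(f-g)-g*(b-c)),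
      sq_nonneg (c*(2*h-g)-g*(2*d-c))]
  have hC : c*(2*h-g)-g*(2*d-c) = 0 := by
    nlinarith [sq_nonneg (c*(2*e-f-g) - g*(2*a-b-c)), sq_nonneg (c*(f-g)-g*(b-c)),
      sq_nonneg (c*(2*h-g)-g*(2*d-c))]
  refine ⟨⟨by linarith [hA, hB], by linarith [hB], by linarith [hC]⟩, ?_⟩
  intro hc
  subst hc
  have h4 : (2*a-b)^2 + 3*b^2 + (2*d)^2 = 0 := by linear_combination 4*hy
  have hb : b^2 = 0 := by nlinarith [sq_nonneg (2*a-b), sq_nonneg (2*d)]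
  have hb0 : b = 0 := pow_eq_zero_iff (by norm_num) |>.mp hb
  subst hb0
  have hd : d^2 = 0 := by nlinarith [sq_nonneg (2*a)]
  have hd0 : d = 0 := pow_eq_zero_iff (by norm_num) |>.mp hd
  subst hd0
  have ha : a^2 = 0 := by nlinarith
  exact ⟨pow_eq_zero_iff (by norm_num) |>.mp ha, rfl, rfl⟩

private lemma seifert_no_pair (y z : Fin 4 → ℤ)
    (hli : LinearIndependent ℤ ![y, z])
    (hy : y 0*(y 0-y 1-y 2) + y 1*(y 1-y 2) + y 2*(y 2-y 3) + y 3*y 3 = 0)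
    (hz : z 0*(z 0-z 1-z 2) + z 1*(z 1-z 2) + z 2*(z 2-z 3) + z 3*z 3 = 0)
    (hyz : y 0*(z 0-z 1-z 2) + y 1*(z 1-z 2) + y 2*(z 2-z 3) + y 3*z 3 = 0)
    (hzy : z 0*(y 0-y 1-y 2) + z 1*(y 1-y 2) + z 2*(y 2-y 3) + z 3*y 3 = 0) :
    False := by
  obtain ⟨⟨e1, e2, e4⟩, hzero⟩ :=
    seifert_core (y 0) (y 1) (y 2) (y 3) (z 0) (z 1) (z 2) (z 3) hy hz hyz hzy
  by_cases hc : y 2 = 0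
  · obtain ⟨h0, h1, h3'⟩ := hzero hc
    apply hli.ne_zero 0
    show y = 0
    funext k
    fin_cases k <;> simp_all
  · have hrel : (-(z 2)) • y + (y 2) • z = 0 := by
      funext k
      fin_cases k
      · show -(z 2) * y 0 + y 2 * z 0 = 0; linarith
      · show -(z 2) * y 1 + y 2 * z 1 = 0; linarith
      · show -(z 2) * y 2 + y 2 * z 2 = 0; ring
      · show -(z 2) * y 3 + y 2 * z 3 = 0; linarith
    have := (Fintype.linearIndependent_iff.mp hli) ![-(z 2), y 2] ?_ 1
    · simp at this
      exact hc this
    · rw [Fin.sum_univ_two]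
      simpa using hrel

theorem stmt_18 :
    (![1, 1, 1, 0] ⬝ᵥ
        (!![1, -1, -1, 0; 0, 1, -1, 0; 0, 0, 1, -1; 0, 0, 0, 1] :
          Matrix (Fin 4) (Fin 4) ℤ).mulVec ![1, 1, 1, 0] = 0) ∧
    (∃ N : Submodule ℤ (Fin 4 → ℤ),
      (∀ y ∈ N, ∀ z ∈ N, y ⬝ᵥ
        (!![1, -1, -1, 0; 0, 1, -1, 0; 0, 0, 1, -1; 0, 0, 0, 1] :
          Matrix (Fin 4) (Fin 4) ℤ).mulVec z = 0) ∧
      Module.finrank ℤ N = 1) ∧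
    (∀ N : Submodule ℤ (Fin 4 → ℤ),
      (∀ y ∈ N, ∀ z ∈ N, y ⬝ᵥ
        (!![1, -1, -1, 0; 0, 1, -1, 0; 0, 0, 1, -1; 0, 0, 0, 1] :
          Matrix (Fin 4) (Fin 4) ℤ).mulVec z = 0) →
      Module.finrank ℤ N ≤ 1) := by
  refine ⟨?_, ?_, ?_⟩
  · rw [seifert_pair]; rfl
  · -- the rank-one example
    refine ⟨ℤ ∙ (![1,1,1,0] : Fin 4 → ℤ), ?_, ?_⟩
    · intro y hy z hz
      obtain ⟨s, rfl⟩ := Submodule.mem_span_singleton.mp hy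
      obtain ⟨t, rfl⟩ := Submodule.mem_span_singleton.mp hz
      rw [seifert_pair]
      simp only [Pi.smul_apply, smul_eq_mul, Matrix.cons_val_zero, Matrix.cons_val_one,
        Matrix.head_cons, Matrix.cons_val_two, Matrix.tail_cons, Matrix.cons_val_three]
      ring
    · have hv : (![1,1,1,0] : Fin 4 → ℤ) ≠ 0 := by
        intro h
        have := congrFun h 0
        simp at this
      have hinj : Function.Injective
          (LinearMap.toSpanSingleton ℤ (Fin 4 → ℤ) ![1,1,1,0]) := by
        intro s t hst
        exact smul_left_injective ℤ hv hst
      have e := LinearEquiv.ofInjective _ hinj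
      rw [← LinearMap.span_singleton_eq_range] at e
      rw [← e.finrank_eq]
      simp
  · intro N hN
    by_contra hrk
    push_neg at hrk
    have h2 : 2 ≤ Module.finrank ℤ N := hrk
    -- extract two linearly independent vectors
    let b := Module.Free.chooseBasis ℤ N
    have hcard : 2 ≤ Fintype.card (Module.Free.ChooseBasisIndex ℤ N) := by
      rwa [← Module.finrank_eq_card_chooseBasisIndex]
    obtain ⟨i, j, hij⟩ := Fintype.exists_pair_of_one_lt_card hcard
    have hinj : Function.Injective (![i, j] : Fin 2 → _) := by
      intro x y hxy
      fin_cases x <;> fin_cases y <;> simp_all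
    have h2' : LinearIndependent ℤ (⇑b ∘ ![i, j]) := b.linearIndependent.comp ![i, j] hinj
    have h3 := h2'.map' N.subtype (N.ker_subtype)
    have hli : LinearIndependent ℤ ![((b i : N) : Fin 4 → ℤ), ((b j : N) : Fin 4 → ℤ)] := by
      convert h3 using 1
      ext k
      fin_cases k <;> simp
      all_goals rfl
    have hyN := (b i : N).2
    have hzN := (b j : N).2
    have hy := hN _ hyN _ hyN
    have hz := hN _ hzN _ hzN
    have hyz := hN _ hyN _ hzN
    have hzy := hN _ hzN _ hyN
    rw [seifert_pair] at hy hz hyz hzy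
    exact seifert_no_pair _ _ hli hy hz hyz hzy
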